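/- Subexpression property: for states s, s' of the environment-based semantics, if s ⇓ s' or s → s' then exp_sup(s) ⊇ exp_sup(s'). -/
import Mathlib


/- Untyped λ-expressions. -/
inductive Exp : Type
  | var : String → Exp
  | app : Exp → Exp → Exp
  | lam : String → Exp → Exp
deriving DecidableEq

namespace Exp

/-- Free variables. -/
def fv : Exp → Finset String
  | var x => {x}
  | app e1 e2 => fv e1 ∪ fv e2
  | lam x e => fv e \ {x}

/-- The set of subexpressions of a λ-expression. -/
def subexp : Exp → Set Exp
  | var x => {var x}
  | app e1 e2 => insert (app e1 e2) (subexp e1 ∪ subexp e2)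
  | lam x e => insert (lam x e) (subexp e)

end Exp

/- Values (closures), environments and states of the environment-based
semantics.  An environment is a (partial) map from variable names to values;
a state `e:ρ` pairs an expression with an environment. -/
inductive Val : Type
  | clos : String → Exp → (String → Option Val) → Val

abbrev Env := String → Option Val
abbrev State := Exp × Env

/-- A value `λx.e:ρ` viewed as a state. -/
def Val.toState : Val → State
  | .clos x e ρ => (Exp.lam x e, ρ)

/-- The λ-expression component of a value. -/
def Val.toExp : Val → Exp
  | .clos x e _ => Exp.lam x e

def Env.update (ρ : Env) (x : String) (v : Val) : Env :=
  fun y => if y = x then some v else ρ y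

def Env.empty : Env := fun _ => none
/- Environment-based evaluation `s ⇓ v` and the call relations
`→r` (Operator), `→d` (Operand), `→c` (Call); (Apply) evaluates an
application via its `→c` call. -/
mutual
  inductive EvalE : State → Val → Prop
    | value (x : String) (e : Exp) (ρ : Env) :
        EvalE (Exp.lam x e, ρ) (Val.clos x e ρ)
    | var {ρ : Env} {x : String} {v : Val} :
        ρ x = some v → EvalE (Exp.var x, ρ) v
    | apply {s s' : State} {v : Val} :
        CallC s s' → EvalE s' v → EvalE s v
  inductive CallC : State → State → Prop
    | call {e1 e2 : Exp} {ρ ρ0 : Env} {x : String} {e0 : Exp} {v2 : Val} :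
        EvalE (e1, ρ) (Val.clos x e0 ρ0) → EvalE (e2, ρ) v2 →
        CallC (Exp.app e1 e2, ρ) (e0, Env.update ρ0 x v2)
end

inductive CallR : State → State → Prop
  | oper (e1 e2 : Exp) (ρ : Env) : CallR (Exp.app e1 e2, ρ) (e1, ρ)

inductive CallD : State → State → Prop
  | opnd {e1 : Exp} {ρ : Env} {v1 : Val} (e2 : Exp) :
      EvalE (e1, ρ) v1 → CallD (Exp.app e1 e2, ρ) (e2, ρ)

/-- The call relation `→` on states is `→r ∪ →d ∪ →c`. -/
def Call (s s' : State) : Prop := CallR s s' ∨ CallD s s' ∨ CallC s s'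
/-- `ExpSup s e'` means `e' ∈ exp_sup(s)`, where
`exp_sup(e:ρ) = subexp(e) ∪ ⋃_{x ∈ fv(e)} exp_sup(ρ(x))`. -/
inductive ExpSup : State → Exp → Prop
  | sub {e : Exp} {ρ : Env} {e' : Exp} :
      e' ∈ Exp.subexp e → ExpSup (e, ρ) e'
  | env {e : Exp} {ρ : Env} {x : String} {v : Val} {e' : Exp} :
      x ∈ e.fv → ρ x = some v → ExpSup v.toState e' → ExpSup (e, ρ) e'

lemma expSup_app_left {e1 e2 : Exp} {ρ : Env} {e' : Exp}
    (h : ExpSup (e1, ρ) e') : ExpSup (Exp.app e1 e2, ρ) e' := by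
  cases h with
  | sub hm => exact .sub (Set.mem_insert_of_mem _ (Or.inl hm))
  | env hx hρ hs => exact .env (Finset.mem_union_left _ hx) hρ hs

lemma expSup_app_right {e1 e2 : Exp} {ρ : Env} {e' : Exp}
    (h : ExpSup (e2, ρ) e') : ExpSup (Exp.app e1 e2, ρ) e' := by
  cases h with
  | sub hm => exact .sub (Set.mem_insert_of_mem _ (Or.inr hm))
  | env hx hρ hs => exact .env (Finset.mem_union_right _ hx) hρ hs

lemma expSup_call {x : String} {e0 : Exp} {ρ0 : Env} {v2 : Val} {e' : Exp}
    (h : ExpSup (e0, Env.update ρ0 x v2) e') :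
    ExpSup (Exp.lam x e0, ρ0) e' ∨ ExpSup v2.toState e' := by
  cases h with
  | sub hm => exact Or.inl (.sub (Set.mem_insert_of_mem _ hm))
  | @env _ _ y v _ hy hρ hs =>
    by_cases hxy : y = x
    · unfold Env.update at hρ
      simp [hxy] at hρ
      subst hρ
      exact Or.inr hs
    · unfold Env.update at hρ
      simp [hxy] at hρ
      exact Or.inl (.env (by simp [Exp.fv, hy, hxy]) hρ hs)

lemma eval_main :
    (∀ (s : State) (v : Val), EvalE s v →
      ∀ e', ExpSup v.toState e' → ExpSup s e') :=
  fun s v h =>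
    EvalE.rec
      (motive_1 := fun s v _ => ∀ e', ExpSup v.toState e' → ExpSup s e')
      (motive_2 := fun s s' _ => ∀ e', ExpSup s' e' → ExpSup s e')
      (fun _ _ _ _ h => h)
      (fun hρ _ h => .env (Finset.mem_singleton_self _) hρ h)
      (fun _ _ ihc ihe e' h => ihc e' (ihe e' h))
      (fun _ _ ih1 ih2 e' h => by
        rcases expSup_call h with h' | h'
        · exact expSup_app_left (ih1 e' h')
        · exact expSup_app_right (ih2 e' h'))
      h

/-- Subexpression property: if `s ⇓ s'` or `s → s'` then
`exp_sup(s) ⊇ exp_sup(s')`. -/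
theorem subexpression_property :
    (∀ (s : State) (v : Val), EvalE s v →
      ∀ e', ExpSup v.toState e' → ExpSup s e') ∧
    (∀ s s' : State, Call s s' →
      ∀ e', ExpSup s' e' → ExpSup s e') := by
  refine ⟨eval_main, fun s s' hc e' h => ?_⟩
  rcases hc with hr | hd | hcc
  · cases hr; exact expSup_app_left h
  · cases hd; exact expSup_app_right h
  · cases hcc with
    | call h1 h2 =>
      rcases expSup_call h with h' | h'
      · exact expSup_app_left (eval_main _ _ h1 e' h')
      · exact expSup_app_right (eval_main _ _ h2 e' h')
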